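/- Let a_1,...,a_n be pairwise coprime positive integers with a_1 even, and b_1,...,b_n integers with Σ_i b_i·(a_1···a_n)/a_i = 1 and all a_i - b_i odd. Then 1/8 + (1/2)·Σ_i s((a_1···a_n)/a_i, a_i) + Σ_i s((a_1···a_n)/a_i, a_i; 1/2, 1/2) = 1/8 + (1/2)·Σ_i s(a_i - b_i, a_i) - Σ_i s(a_i - b_i, 2a_i). -/

import Mathlib

open Finset Real

open Classical in
/-- The sawtooth function: 0 on integers, fractional part minus 1/2 otherwise. -/
noncomputable def saw (x : ℝ) : ℝ :=
  if ∃ n : ℤ, x = n then 0 else Int.fract x - 1/2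

/-- The Dedekind sum s(q,p). -/
noncomputable def dedekindSum (q : ℤ) (p : ℕ) : ℝ :=
  ∑ μ ∈ Finset.range p, saw ((μ : ℝ) / p) * saw ((q : ℝ) * μ / p)

/-- The Dedekind–Rademacher sum s(q,p;x,y). -/
noncomputable def drSum (q : ℤ) (p : ℕ) (x y : ℝ) : ℝ :=
  ∑ μ ∈ Finset.range p, saw (((μ : ℝ) + y) / p) * saw ((q : ℝ) * ((μ : ℝ) + y) / p + x)

lemma saw_add_int (x : ℝ) (n : ℤ) : saw (x + n) = saw x := by
  unfold saw
  split_ifs with h1 h2 h2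
  · rfl
  · obtain ⟨m, hm⟩ := h1; exact absurd ⟨m - n, by push_cast; linarith⟩ h2
  · obtain ⟨m, rfl⟩ := h2; exact absurd ⟨m + n, by push_cast; ring⟩ h1
  · rw [Int.fract_add_intCast]

lemma saw_neg (x : ℝ) : saw (-x) = -saw x := by
  unfold saw
  split_ifs with h1 h2 h2
  · ring
  · obtain ⟨m, hm⟩ := h1; exact absurd ⟨-m, by push_cast at hm ⊢; linarith⟩ h2
  · obtain ⟨m, rfl⟩ := h2; exact absurd ⟨-m, by push_cast; ring⟩ h1
  · have hf : Int.fract x ≠ 0 := by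
      intro h0
      exact h2 ⟨⌊x⌋, by have := Int.fract_add_floor x; rw [h0] at this; linarith⟩
    rw [Int.fract_neg hf]; ring

lemma saw_eq_of_int_diff {x y : ℝ} (n : ℤ) (h : x = y + n) : saw x = saw y := by
  rw [h, saw_add_int]

lemma ds_congr (q q' : ℤ) (p : ℕ) (h : (p:ℤ) ∣ q - q') :
    dedekindSum q p = dedekindSum q' p := by
  unfold dedekindSum
  refine Finset.sum_congr rfl fun μ hμ => ?_
  have hp : 0 < p := Nat.pos_of_ne_zero (by rintro rfl; simp at hμ)
  have hpR : (p:ℝ) ≠ 0 := Nat.cast_ne_zero.mpr hp.ne'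
  obtain ⟨k, hk⟩ := h
  congr 1
  refine saw_eq_of_int_diff (k * μ) ?_
  have hkR : (q:ℝ) = q' + p * k := by
    have : (q:ℝ) - q' = p * k := by exact_mod_cast congrArg (Int.cast : ℤ → ℝ) hk
    linarith
  field_simp [hkR]; push_cast; rw [hkR]; ring

lemma ds_neg (q : ℤ) (p : ℕ) : dedekindSum (-q) p = -dedekindSum q p := by
  unfold dedekindSum
  rw [← Finset.sum_neg_distrib]
  refine Finset.sum_congr rfl fun μ hμ => ?_
  have : ((-q : ℤ):ℝ) * μ / p = -((q:ℝ) * μ / p) := by push_cast; ring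
  rw [this, saw_neg]; ring

lemma ds_inv (q q' : ℤ) (p : ℕ) (hp : 0 < p) (h : (p:ℤ) ∣ q * q' - 1) :
    dedekindSum q p = dedekindSum q' p := by
  have hpZ : (p:ℤ) ≠ 0 := by exact_mod_cast hp.ne'
  have hpR : (p:ℝ) ≠ 0 := Nat.cast_ne_zero.mpr hp.ne'
  obtain ⟨k, hk⟩ := h
  unfold dedekindSum
  refine Finset.sum_nbij' (fun μ => ((q * μ) % (p:ℤ)).toNat)
    (fun ν => ((q' * ν) % (p:ℤ)).toNat) ?_ ?_ ?_ ?_ ?_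
  · intro μ _
    simp only [Finset.mem_range]
    have h1 : (q*μ) % p < p := Int.emod_lt_of_pos _ (by exact_mod_cast hp)
    omega
  · intro ν _
    simp only [Finset.mem_range]
    have h1 : (q'*ν) % p < p := Int.emod_lt_of_pos _ (by exact_mod_cast hp)
    omega
  · intro μ hμ
    rw [Finset.mem_range] at hμ
    have h0 : 0 ≤ (q*μ) % p := Int.emod_nonneg _ hpZ
    show ((q' * ((((q * (μ:ℤ)) % (p:ℤ)).toNat : ℕ) : ℤ)) % p).toNat = μ
    rw [Int.toNat_of_nonneg h0]
    have key : (q' * ((q * μ) % p)) % p = (μ:ℤ) % p := by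
      rw [Int.mul_emod, Int.emod_emod_of_dvd _ dvd_rfl, ← Int.mul_emod]
      rw [Int.emod_eq_emod_iff_emod_sub_eq_zero]
      refine Int.emod_eq_zero_of_dvd ⟨k * μ, ?_⟩
      linear_combination (μ:ℤ) * hk
    rw [key, Int.emod_eq_of_lt (by positivity) (by exact_mod_cast hμ)]
    omega
  · intro ν hν
    rw [Finset.mem_range] at hν
    have h0 : 0 ≤ (q'*ν) % p := Int.emod_nonneg _ hpZ
    show ((q * ((((q' * (ν:ℤ)) % (p:ℤ)).toNat : ℕ) : ℤ)) % p).toNat = ν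
    rw [Int.toNat_of_nonneg h0]
    have key : (q * ((q' * ν) % p)) % p = (ν:ℤ) % p := by
      rw [Int.mul_emod, Int.emod_emod_of_dvd _ dvd_rfl, ← Int.mul_emod]
      rw [Int.emod_eq_emod_iff_emod_sub_eq_zero]
      refine Int.emod_eq_zero_of_dvd ⟨k * ν, ?_⟩
      linear_combination (ν:ℤ) * hk
    rw [key, Int.emod_eq_of_lt (by positivity) (by exact_mod_cast hν)]
    omega
  · intro μ hμ
    rw [Finset.mem_range] at hμ
    set r : ℤ := (q * μ) % p with hr
    set d : ℤ := (q * μ) / p with hd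
    have h0 : 0 ≤ r := Int.emod_nonneg _ hpZ
    have hdec : (q * μ : ℤ) = r + p * d := by
      rw [hr, hd]; linarith [Int.emod_add_mul_ediv (q*(μ:ℤ)) (p:ℤ)]
    have hcast : ((((q * (μ:ℤ)) % (p:ℤ)).toNat : ℕ) : ℝ) = (r:ℝ) := by
      rw [← hr]; exact_mod_cast congrArg (Int.cast : ℤ → ℝ) (Int.toNat_of_nonneg h0)
    rw [hcast]
    have e1 : (r:ℝ)/p = (q:ℝ) * μ / p + (-d : ℤ) := by
      have : (r:ℝ) = q * μ - p * d := by
        have := congrArg (Int.cast : ℤ → ℝ) hdec; push_cast at this; linarith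
      rw [this]; push_cast; field_simp; ring
    have e2 : (q':ℝ) * r / p = (μ:ℝ)/p + ((k * μ - q' * d : ℤ) : ℝ) := by
      have hint : q' * r = μ + p * (k * μ - q' * d) := by
        linear_combination q' * hdec.symm + (μ:ℤ) * hk
      have := congrArg (Int.cast : ℤ → ℝ) hint; push_cast at this
      field_simp; push_cast; linarith [this]
    rw [saw_eq_of_int_diff _ e1, saw_eq_of_int_diff _ e2, mul_comm]

lemma sum_range_two_mul (a : ℕ) (f : ℕ → ℝ) :
    ∑ μ ∈ Finset.range (2*a), f μ = ∑ ν ∈ Finset.range a, (f (2*ν) + f (2*ν+1)) := by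
  induction a with
  | zero => simp
  | succ n ih =>
    have h2 : 2*(n+1) = (2*n)+1+1 := by ring
    rw [h2, Finset.sum_range_succ, Finset.sum_range_succ, ih, Finset.sum_range_succ]; ring

noncomputable def oddPart (q : ℤ) (a : ℕ) : ℝ :=
  ∑ ν ∈ Finset.range a, saw ((2*(ν:ℝ)+1)/(2*a)) * saw ((q:ℝ)*(2*(ν:ℝ)+1)/(2*a))

lemma ds_two_mul (q : ℤ) (a : ℕ) (ha : 0 < a) :
    dedekindSum q (2*a) = dedekindSum q a + oddPart q a := by
  have haR : (a:ℝ) ≠ 0 := Nat.cast_ne_zero.mpr ha.ne'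
  unfold dedekindSum oddPart
  rw [sum_range_two_mul, ← Finset.sum_add_distrib]
  refine Finset.sum_congr rfl fun ν _ => ?_
  have c1 : (((2*ν : ℕ)):ℝ) / ((2*a : ℕ):ℝ) = (ν:ℝ)/a := by push_cast; field_simp
  have c2 : (q:ℝ) * ((2*ν : ℕ):ℝ) / ((2*a : ℕ):ℝ) = (q:ℝ)*ν/a := by push_cast; field_simp
  have c3 : (((2*ν+1 : ℕ)):ℝ) / ((2*a : ℕ):ℝ) = (2*(ν:ℝ)+1)/(2*a) := by push_cast; ring_nf
  have c4 : (q:ℝ) * ((2*ν+1 : ℕ):ℝ) / ((2*a : ℕ):ℝ) = (q:ℝ)*(2*(ν:ℝ)+1)/(2*a) := by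
    push_cast; ring_nf
  rw [c1, c2, c3, c4]

lemma dr_eq_oddPart (A : ℤ) (a : ℕ) (ha : 0 < a) :
    drSum A a (1/2) (1/2) = oddPart (A + a) a := by
  have haR : (a:ℝ) ≠ 0 := Nat.cast_ne_zero.mpr ha.ne'
  unfold drSum oddPart
  refine Finset.sum_congr rfl fun ν _ => ?_
  have c1 : ((ν:ℝ) + 1/2) / a = (2*(ν:ℝ)+1)/(2*a) := by field_simp
  have c2 : ((A + a : ℤ):ℝ)*(2*(ν:ℝ)+1)/(2*(a:ℝ))
      = ((A:ℝ) * ((ν:ℝ) + 1/2) / a + 1/2) + (ν:ℤ) := by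
    push_cast; field_simp; ring
  rw [c1, saw_eq_of_int_diff _ c2]

lemma key_identity (A b : ℤ) (a : ℕ) (ha : 0 < a)
    (h1 : (a:ℤ) ∣ A * b - 1)
    (h2 : ((2*a : ℕ):ℤ) ∣ (A + a) * (b - a) - 1) :
    (1/2) * dedekindSum A a + drSum A a (1/2) (1/2)
      = (1/2) * dedekindSum ((a:ℤ) - b) a - dedekindSum ((a:ℤ) - b) (2*a) := by
  have h2a : 0 < 2*a := by omega
  have e1 : dedekindSum ((a:ℤ) - b) a = -dedekindSum A a := by
    have s1 : dedekindSum ((a:ℤ) - b) a = dedekindSum (-b) a :=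
      ds_congr _ _ _ ⟨1, by ring⟩
    have s2 : dedekindSum A a = dedekindSum b a := ds_inv A b a ha h1
    rw [s1, ds_neg, s2]
  have e2 : dedekindSum (A + (a:ℤ)) a = dedekindSum A a := ds_congr _ _ _ ⟨1, by ring⟩
  have e3 : dedekindSum (A + (a:ℤ)) (2*a) = -dedekindSum ((a:ℤ) - b) (2*a) := by
    have s1 : dedekindSum (A + (a:ℤ)) (2*a) = dedekindSum (b - a) (2*a) :=
      ds_inv _ _ _ h2a h2
    have s2 : (b - (a:ℤ)) = -((a:ℤ) - b) := by ring
    rw [s1, s2, ds_neg]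
  have e4 : drSum A a (1/2) (1/2)
      = dedekindSum (A + (a:ℤ)) (2*a) - dedekindSum (A + (a:ℤ)) a := by
    rw [dr_eq_oddPart A a ha, ds_two_mul _ _ ha]; ring
  rw [e4, e2, e3, e1]; ring

theorem even_case_eta_eq_mu (n : ℕ) (a : Fin (n+1) → ℕ) (b : Fin (n+1) → ℤ)
    (hpos : ∀ i, 0 < a i) (heven : Even (a 0))
    (hcop : ∀ i j, i ≠ j → Nat.Coprime (a i) (a j))
    (hsum : ∑ i, b i * ∏ j ∈ Finset.univ.erase i, (a j : ℤ) = 1)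
    (hodddiff : ∀ i, Odd ((a i : ℤ) - b i)) :
    1/8 + (1/2) * ∑ i, dedekindSum (∏ j ∈ Finset.univ.erase i, (a j : ℤ)) (a i)
      + ∑ i, drSum (∏ j ∈ Finset.univ.erase i, (a j : ℤ)) (a i) (1/2) (1/2)
    = 1/8 + (1/2) * ∑ i, dedekindSum ((a i : ℤ) - b i) (a i)
      - ∑ i, dedekindSum ((a i : ℤ) - b i) (2 * a i) := by
  set A : Fin (n+1) → ℤ := fun i => ∏ j ∈ Finset.univ.erase i, (a j : ℤ) with hA
  -- divisibility of the cofactors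
  have hA_dvd : ∀ i j : Fin (n+1), i ≠ j → (a i : ℤ) ∣ A j := fun i j hij =>
    Finset.dvd_prod_of_mem _ (Finset.mem_erase.mpr ⟨hij, Finset.mem_univ i⟩)
  -- b i * A i ≡ 1 mod a i
  have hsum' : ∀ i : Fin (n+1), b i * A i + ∑ j ∈ Finset.univ.erase i, b j * A j = 1 := by
    intro i
    rw [Finset.add_sum_erase _ (fun j => b j * A j) (Finset.mem_univ i)]
    exact hsum
  have h1 : ∀ i : Fin (n+1), (a i : ℤ) ∣ A i * b i - 1 := by
    intro i
    have : A i * b i - 1 = -∑ j ∈ Finset.univ.erase i, b j * A j := by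
      have := hsum' i; linarith [this]
    rw [this]
    exact dvd_neg.mpr (Finset.dvd_sum fun j hj =>
      ((hA_dvd i j fun h => (Finset.mem_erase.mp hj).1 h.symm).mul_left (b j)))
  -- parity facts
  have haodd : ∀ i : Fin (n+1), i ≠ 0 → Odd (a i) := by
    intro i hi
    rw [← Nat.not_even_iff_odd]
    intro hevi
    have h2 : (2:ℕ) ∣ Nat.gcd (a i) (a 0) := Nat.dvd_gcd hevi.two_dvd heven.two_dvd
    rw [hcop i 0 hi] at h2
    omega
  have haoddZ : ∀ i : Fin (n+1), i ≠ 0 → Odd ((a i : ℤ)) := fun i hi =>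
    (Int.odd_coe_nat (a i)).mpr (haodd i hi)
  have hbeven : ∀ i : Fin (n+1), i ≠ 0 → Even (b i) := by
    intro i hi
    have h3 : b i = (a i : ℤ) - ((a i : ℤ) - b i) := by ring
    rw [h3]
    exact (haoddZ i hi).sub_odd (hodddiff i)
  have hb0odd : Odd (b 0) := by
    have h3 : b 0 = (a 0 : ℤ) - ((a 0 : ℤ) - b 0) := by ring
    rw [h3]
    have : Even ((a 0 : ℤ)) := by exact_mod_cast heven
    exact this.sub_odd (hodddiff 0)
  have hA0odd : Odd (A 0) := by
    rw [hA]
    refine Finset.prod_induction _ Odd (fun x y hx hy => hx.mul hy) odd_one ?_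
    intro j hj
    exact haoddZ j (Finset.mem_erase.mp hj).1
  have hAeven : ∀ i : Fin (n+1), i ≠ 0 → Even (A i) := by
    intro i hi
    have hdvd : (a 0 : ℤ) ∣ A i := hA_dvd 0 i fun h => hi h.symm
    have h2 : (2:ℤ) ∣ (a 0 : ℤ) := by
      have : Even ((a 0 : ℤ)) := by exact_mod_cast heven
      exact this.two_dvd
    obtain ⟨t, ht⟩ := h2.trans hdvd
    exact ⟨t, by linarith⟩
  -- key congruence mod 2 a i
  have h2 : ∀ i : Fin (n+1), ((2 * a i : ℕ) : ℤ) ∣ (A i + a i) * (b i - a i) - 1 := by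
    intro i
    by_cases hi : i = 0
    · subst hi
      have hAb : ((2 * a 0 : ℕ) : ℤ) ∣ A 0 * b 0 - 1 := by
        have heq : A 0 * b 0 - 1 = -∑ j ∈ Finset.univ.erase 0, b j * A j := by
          have := hsum' 0; linarith [this]
        rw [heq]
        refine dvd_neg.mpr (Finset.dvd_sum fun j hj => ?_)
        have hj0 : j ≠ 0 := (Finset.mem_erase.mp hj).1
        obtain ⟨s, hs⟩ := hbeven j hj0
        obtain ⟨t, ht⟩ := hA_dvd 0 j fun h => hj0 h.symm
        exact ⟨s * t, by push_cast; rw [hs, ht]; ring⟩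
      obtain ⟨m, hm⟩ := hAb
      obtain ⟨u, hu⟩ : Even (b 0 - A 0 - (a 0 : ℤ)) := by
        have e1 : Even (b 0 - A 0) := hb0odd.sub_odd hA0odd
        have e2 : Even ((a 0 : ℤ)) := by exact_mod_cast heven
        exact e1.sub e2
      exact ⟨m + u, by push_cast at hm ⊢; linear_combination hm + (a 0 : ℤ) * hu⟩
    · obtain ⟨m, hm⟩ := h1 i
      have hmodd : Odd m := by
        have h3 : Odd ((a i : ℤ) * m) := by
          rw [← hm]
          obtain ⟨s, hs⟩ := hAeven i hi
          refine Even.sub_odd ?_ odd_one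
          exact ⟨s * b i, by rw [hs]; ring⟩
        exact ((Int.odd_mul).mp h3).2
      obtain ⟨u, hu⟩ : Even (m + b i - A i - (a i : ℤ)) := by
        have e1 : Even (m - (a i : ℤ)) := hmodd.sub_odd (haoddZ i hi)
        have e2 : Even (b i - A i) := (hbeven i hi).sub (hAeven i hi)
        obtain ⟨x, hx⟩ := e1; obtain ⟨y, hy⟩ := e2
        exact ⟨x + y, by linarith [hx, hy]⟩
      exact ⟨u, by push_cast; linear_combination hm + (a i : ℤ) * hu⟩
  -- assemble
  have hkey : ∀ i : Fin (n+1),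
      (1/2) * dedekindSum (A i) (a i) + drSum (A i) (a i) (1/2) (1/2)
        = (1/2) * dedekindSum ((a i : ℤ) - b i) (a i)
          - dedekindSum ((a i : ℤ) - b i) (2 * a i) := fun i =>
    key_identity (A i) (b i) (a i) (hpos i) (h1 i) (h2 i)
  have main : ∑ i, ((1/2) * dedekindSum (A i) (a i) + drSum (A i) (a i) (1/2) (1/2))
      = ∑ i, ((1/2) * dedekindSum ((a i : ℤ) - b i) (a i)
          - dedekindSum ((a i : ℤ) - b i) (2 * a i)) :=
    Finset.sum_congr rfl fun i _ => hkey i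
  rw [Finset.sum_add_distrib, Finset.sum_sub_distrib, ← Finset.mul_sum, ← Finset.mul_sum] at main
  linarith [main]
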